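/- Let h(x,y) = c₀x³ + c₁x²y + c₂xy² + c₃y³ be a homogeneous polynomial of degree 3 with integer coefficients c₀, c₁, c₂, c₃ ∈ ℤ, not identically zero. Suppose there exist real numbers a₁, b₁, a₂, b₂ such that h(x,y) = (a₁x + b₁y)²(a₂x + b₂y) for all (x,y). Then there exist rational numbers a₁', b₁', a₂', b₂' ∈ ℚ and a real number d such that h(x,y) = d · (a₁'x + b₁'y)²(a₂'x + b₂'y) for all (x,y). -/

import Mathlib

private lemma key13 (c₀ c₁ c₂ c₃ d A B C E : ℝ)
    (h0 : c₀ = d * A ^ 2 * C) (h1 : c₁ = d * (A ^ 2 * E + 2 * A * B * C))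
    (h2 : c₂ = d * (2 * A * B * E + B ^ 2 * C)) (h3 : c₃ = d * B ^ 2 * E) :
    ∀ x y : ℝ, c₀ * x ^ 3 + c₁ * x ^ 2 * y + c₂ * x * y ^ 2 + c₃ * y ^ 3 =
      d * (A * x + B * y) ^ 2 * (C * x + E * y) := by
  intro x y
  linear_combination x ^ 3 * h0 + x ^ 2 * y * h1 + x * y ^ 2 * h2 + y ^ 3 * h3

theorem stmt_13 (c₀ c₁ c₂ c₃ : ℤ) (hne : ¬(c₀ = 0 ∧ c₁ = 0 ∧ c₂ = 0 ∧ c₃ = 0))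
    (hfac : ∃ a₁ b₁ a₂ b₂ : ℝ, ∀ x y : ℝ,
      (c₀ : ℝ) * x ^ 3 + (c₁ : ℝ) * x ^ 2 * y + (c₂ : ℝ) * x * y ^ 2 + (c₃ : ℝ) * y ^ 3 =
        (a₁ * x + b₁ * y) ^ 2 * (a₂ * x + b₂ * y)) :
    ∃ (a₁' b₁' a₂' b₂' : ℚ) (d : ℝ), ∀ x y : ℝ,
      (c₀ : ℝ) * x ^ 3 + (c₁ : ℝ) * x ^ 2 * y + (c₂ : ℝ) * x * y ^ 2 + (c₃ : ℝ) * y ^ 3 =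
        d * ((a₁' : ℝ) * x + (b₁' : ℝ) * y) ^ 2 * ((a₂' : ℝ) * x + (b₂' : ℝ) * y) := by
  obtain ⟨a₁, b₁, a₂, b₂, heq⟩ := hfac
  have e0 : (c₀ : ℝ) = a₁ ^ 2 * a₂ := by linear_combination heq 1 0
  have e3 : (c₃ : ℝ) = b₁ ^ 2 * b₂ := by linear_combination heq 0 1
  have e1 : (c₁ : ℝ) = a₁ ^ 2 * b₂ + 2 * a₁ * b₁ * a₂ := by
    linear_combination (heq 1 1) / 2 - (heq 1 (-1)) / 2 - heq 0 1
  have e2 : (c₂ : ℝ) = 2 * a₁ * b₁ * b₂ + b₁ ^ 2 * a₂ := by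
    linear_combination (heq 1 1) / 2 + (heq 1 (-1)) / 2 - heq 1 0
  by_cases ha₁ : a₁ = 0
  · -- h = y^2 (c₂ x + c₃ y)
    refine ⟨0, 1, (c₂ : ℚ), (c₃ : ℚ), 1, key13 _ _ _ _ _ _ _ _ _ ?_ ?_ ?_ ?_⟩
    · push_cast
      linear_combination e0 + a₁ * a₂ * ha₁
    · push_cast
      linear_combination e1 + (a₁ * b₂ + 2 * b₁ * a₂) * ha₁
    · push_cast; ring
    · push_cast; ring
  · by_cases hD : a₁ * b₂ - a₂ * b₁ = 0
    · by_cases ha₂ : a₂ = 0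
      · -- degenerate: everything vanishes, contradiction
        exfalso
        have hb₂ : b₂ = 0 := by
          have h := hD
          rw [ha₂] at h
          simpa [ha₁] using h
        have z0 : (c₀ : ℝ) = 0 := by rw [e0, ha₂]; ring
        have z1 : (c₁ : ℝ) = 0 := by rw [e1, ha₂, hb₂]; ring
        have z2 : (c₂ : ℝ) = 0 := by rw [e2, ha₂, hb₂]; ring
        have z3 : (c₃ : ℝ) = 0 := by rw [e3, hb₂]; ring
        exact hne ⟨by exact_mod_cast z0, by exact_mod_cast z1,
          by exact_mod_cast z2, by exact_mod_cast z3⟩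
      · -- perfect cube case: h = c₀ (x + q y)^3 with q = c₁/(3c₀)
        have hc0r : (c₀ : ℝ) ≠ 0 := by
          rw [e0]; exact mul_ne_zero (pow_ne_zero 2 ha₁) ha₂
        have h32 : 3 * (c₀ : ℝ) * c₂ = (c₁ : ℝ) ^ 2 := by
          linear_combination 3 * (c₂ : ℝ) * e0 + 3 * (a₁ ^ 2 * a₂) * e2 -
            ((c₁ : ℝ) + a₁ ^ 2 * b₂ + 2 * a₁ * b₁ * a₂) * e1 -
            a₁ ^ 2 * (a₁ * b₂ - a₂ * b₁) * hD
        have h27 : 27 * (c₀ : ℝ) ^ 2 * c₃ = (c₁ : ℝ) ^ 3 := by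
          linear_combination 27 * (c₃ : ℝ) * ((c₀ : ℝ) + a₁ ^ 2 * a₂) * e0 +
            27 * (a₁ ^ 2 * a₂) ^ 2 * e3 -
            ((c₁ : ℝ) ^ 2 + (c₁ : ℝ) * (a₁ ^ 2 * b₂ + 2 * a₁ * b₁ * a₂) +
              (a₁ ^ 2 * b₂ + 2 * a₁ * b₁ * a₂) ^ 2) * e1 -
            a₁ ^ 3 * (a₁ * b₂ - a₂ * b₁) * (a₁ * b₂ + 8 * a₂ * b₁) * hD
        refine ⟨1, (c₁ : ℚ) / (3 * (c₀ : ℚ)), 1, (c₁ : ℚ) / (3 * (c₀ : ℚ)), (c₀ : ℝ),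
          key13 _ _ _ _ _ _ _ _ _ ?_ ?_ ?_ ?_⟩
        · push_cast; ring
        · push_cast; field_simp; ring
        · push_cast; field_simp
          linear_combination 3 * h32
        · push_cast; field_simp
          linear_combination h27
    · by_cases ha₂ : a₂ = 0
      · -- h = (a₁ x + b₁ y)^2 * b₂ y with a₁ b₂ ≠ 0
        have hb₂ : b₂ ≠ 0 := by
          intro h; exact hD (by rw [ha₂, h]; ring)
        have hc1r : (c₁ : ℝ) ≠ 0 := by
          have h' : (c₁ : ℝ) = a₁ ^ 2 * b₂ := by rw [e1, ha₂]; ring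
          rw [h']; exact mul_ne_zero (pow_ne_zero 2 ha₁) hb₂
        have h4c : 4 * (c₁ : ℝ) * c₃ = (c₂ : ℝ) ^ 2 := by
          linear_combination 4 * (c₃ : ℝ) * e1 + 4 * (a₁ ^ 2 * b₂ + 2 * a₁ * b₁ * a₂) * e3 -
            ((c₂ : ℝ) + 2 * a₁ * b₁ * b₂ + b₁ ^ 2 * a₂) * e2 +
            (4 * a₁ * b₁ ^ 3 * b₂ - a₂ * b₁ ^ 4) * ha₂
        refine ⟨2 * (c₁ : ℚ), (c₂ : ℚ), 0, 1, 1 / (4 * (c₁ : ℝ)),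
          key13 _ _ _ _ _ _ _ _ _ ?_ ?_ ?_ ?_⟩
        · push_cast
          rw [e0, ha₂]; ring
        · push_cast; field_simp; ring
        · push_cast; field_simp; ring
        · push_cast; field_simp
          linear_combination h4c
      · -- generic case: double root rational
        have hc0r : (c₀ : ℝ) ≠ 0 := by
          rw [e0]; exact mul_ne_zero (pow_ne_zero 2 ha₁) ha₂
        have hE : (c₁ : ℝ) ^ 2 - 3 * c₀ * c₂ = a₁ ^ 2 * (a₁ * b₂ - a₂ * b₁) ^ 2 := by
          linear_combination ((c₁ : ℝ) + a₁ ^ 2 * b₂ + 2 * a₁ * b₁ * a₂) * e1 -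
            3 * (c₂ : ℝ) * e0 - 3 * (a₁ ^ 2 * a₂) * e2
        have hN : (c₁ : ℝ) * c₂ - 9 * c₀ * c₃ = 2 * a₁ * b₁ * (a₁ * b₂ - a₂ * b₁) ^ 2 := by
          linear_combination (c₂ : ℝ) * e1 + (a₁ ^ 2 * b₂ + 2 * a₁ * b₁ * a₂) * e2 -
            9 * (c₃ : ℝ) * e0 - 9 * (a₁ ^ 2 * a₂) * e3
        set Q : ℚ := ((c₁ * c₂ - 9 * c₀ * c₃ : ℤ) : ℚ) / (2 * ((c₁ ^ 2 - 3 * c₀ * c₂ : ℤ) : ℚ))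
          with hQdef
        set U : ℚ := (c₁ : ℚ) / (c₀ : ℚ) - 2 * Q with hUdef
        have hQcast : (Q : ℝ) = ((c₁ : ℝ) * c₂ - 9 * c₀ * c₃) /
            (2 * ((c₁ : ℝ) ^ 2 - 3 * c₀ * c₂)) := by
          rw [hQdef]; push_cast; ring
        have hQb : (Q : ℝ) = b₁ / a₁ := by
          rw [hQcast, hN, hE]
          rw [div_eq_div_iff (by positivity) ha₁]
          ring
        have hUb : (U : ℝ) = b₂ / a₂ := by
          have hUcast : (U : ℝ) = (c₁ : ℝ) / (c₀ : ℝ) - 2 * (Q : ℝ) := by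
            rw [hUdef]; push_cast; ring
          rw [hUcast, hQb, e0, e1]
          field_simp
          ring
        have hQ' : (Q : ℝ) * a₁ = b₁ := by rw [hQb]; field_simp
        have hU' : (U : ℝ) * a₂ = b₂ := by rw [hUb]; field_simp
        refine ⟨1, Q, 1, U, (c₀ : ℝ), key13 _ _ _ _ _ _ _ _ _ ?_ ?_ ?_ ?_⟩
        · push_cast; ring
        · push_cast
          linear_combination e1 - ((U : ℝ) + 2 * (Q : ℝ)) * e0 - a₁ ^ 2 * hU' -
            2 * a₁ * a₂ * hQ'
        · push_cast
          linear_combination e2 - (2 * (Q : ℝ) * (U : ℝ) + (Q : ℝ) ^ 2) * e0 -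
            2 * a₁ * b₁ * hU' -
            (2 * a₁ * (U : ℝ) * a₂ + a₂ * (b₁ + (Q : ℝ) * a₁)) * hQ'
        · linear_combination e3 - (Q : ℝ) ^ 2 * (U : ℝ) * e0 - b₁ ^ 2 * hU' -
            (U : ℝ) * a₂ * (b₁ + (Q : ℝ) * a₁) * hQ'
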